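/- In the Chevalley–Eilenberg algebra of the Bigalke–Rollenske nilmanifold X^{4n−2} (n ≥ 2), the (4n−3,4n−4)-form η₁ := φ¹∧⋯∧(omit φ^{2n−2})∧⋯∧φ^{4n−2} ∧ φ̄¹∧⋯∧(omit φ̄^{3n−2})∧⋯∧φ̄^{4n−3} has differential whose (4n−3,4n−3)-component equals ±φ¹∧⋯∧φ^{4n−3}∧φ̄¹∧⋯∧φ̄^{4n−3}; in particular it is of the form ε·ψ∧ψ̄ with ψ = φ¹∧⋯∧φ^{4n−3} a simple (4n−3,0)-form and ε ∈ {−1,+1}. -/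

import Mathlib

noncomputable section

abbrev Vsp : Type := (ℕ ⊕ ℕ) →₀ ℂ
abbrev ExtA : Type := ExteriorAlgebra ℂ Vsp

def φ (j : ℕ) : ExtA := ExteriorAlgebra.ι ℂ (Finsupp.single (Sum.inl j) 1)
def φb (j : ℕ) : ExtA := ExteriorAlgebra.ι ℂ (Finsupp.single (Sum.inr j) 1)

/-- the list [1, …, m] -/
def idx (m : ℕ) : List ℕ := (List.range m).map (· + 1)

/-- the span of forms of bidegree (p,q): products of p generators φ and q generators φ̄ -/
def bidSpan (p q : ℕ) : Submodule ℂ ExtA :=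
  Submodule.span ℂ {x | ∃ f : Fin p → ℕ, ∃ g : Fin q → ℕ,
    x = (List.ofFn (φ ∘ f)).prod * (List.ofFn (φb ∘ g)).prod}

namespace BR

notation "ιv" => ExteriorAlgebra.ι ℂ (M := Vsp)

def Pv (L : List Vsp) : ExtA := (L.map (ExteriorAlgebra.ι ℂ)).prod

@[simp] lemma Pv_nil : Pv [] = 1 := rfl
@[simp] lemma Pv_cons (v : Vsp) (L : List Vsp) : Pv (v :: L) = ιv v * Pv L := by
  simp [Pv]
@[simp] lemma Pv_append (A B : List Vsp) : Pv (A ++ B) = Pv A * Pv B := by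
  simp [Pv]
@[simp] lemma Pv_singleton (v : Vsp) : Pv [v] = ιv v := by simp [Pv]

lemma anticomm (v w : Vsp) : ιv v * ιv w = -(ιv w * ιv v) := by
  have h := ExteriorAlgebra.ι_add_mul_swap (R := ℂ) v w
  rw [eq_neg_iff_add_eq_zero]
  exact h

lemma pull (v : Vsp) (L : List Vsp) :
    ιv v * Pv L = ((-1 : ℂ) ^ L.length) • (Pv L * ιv v) := by
  induction L with
  | nil => simp
  | cons w L ih =>
    rw [Pv_cons, ← mul_assoc, anticomm v w, neg_mul, mul_assoc, ih, mul_smul_comm,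
      ← neg_smul, ← mul_assoc]
    congr 1
    rw [List.length_cons, pow_succ]
    ring

lemma pull' (v : Vsp) (L : List Vsp) :
    Pv L * ιv v = ((-1 : ℂ) ^ L.length) • (ιv v * Pv L) := by
  rw [pull, smul_smul, ← pow_add, ← two_mul, pow_mul]
  norm_num

lemma mem_mul_zero {v : Vsp} {L : List Vsp} (h : v ∈ L) : ιv v * Pv L = 0 := by
  induction L with
  | nil => simp at h
  | cons w L ih =>
    rcases List.mem_cons.1 h with rfl | h
    · rw [Pv_cons, ← mul_assoc, ExteriorAlgebra.ι_sq_zero, zero_mul]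
    · rw [Pv_cons, ← mul_assoc, anticomm v w, neg_mul, mul_assoc, ih h, mul_zero, neg_zero]

lemma mul_mem_zero {v : Vsp} {L : List Vsp} (h : v ∈ L) : Pv L * ιv v = 0 := by
  rw [pull', mem_mul_zero h, smul_zero]

lemma swap (A B : List Vsp) :
    Pv A * Pv B = ((-1 : ℂ) ^ (A.length * B.length)) • (Pv B * Pv A) := by
  induction A with
  | nil => simp
  | cons v A ih =>
    rw [Pv_cons, mul_assoc, ih, mul_smul_comm, ← mul_assoc, pull v B, smul_mul_assoc,
      smul_smul, mul_assoc, List.length_cons, ← pow_add]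
    congr 1
    ring_nf

end BR

end
-- part 2
noncomputable section
namespace BR

def Sgn (x y : ExtA) : Prop := ∃ m : ℕ, x = ((-1 : ℂ) ^ m) • y

lemma Sgn.refl (x : ExtA) : Sgn x x := ⟨0, by simp⟩

lemma Sgn.of_eq {x y : ExtA} (h : x = y) : Sgn x y := ⟨0, by simp [h]⟩

lemma Sgn.trans {x y z : ExtA} : Sgn x y → Sgn y z → Sgn x z := by
  rintro ⟨m, rfl⟩ ⟨k, rfl⟩
  exact ⟨m + k, by rw [smul_smul, ← pow_add]⟩

lemma Sgn.symm {x y : ExtA} : Sgn x y → Sgn y x := by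
  rintro ⟨m, rfl⟩
  refine ⟨m, ?_⟩
  rw [smul_smul, ← pow_add, ← two_mul, pow_mul]
  norm_num

lemma Sgn.mulL {x y : ExtA} (z : ExtA) : Sgn x y → Sgn (z * x) (z * y) := by
  rintro ⟨m, rfl⟩; exact ⟨m, by rw [mul_smul_comm]⟩

lemma Sgn.mulR {x y : ExtA} (z : ExtA) : Sgn x y → Sgn (x * z) (y * z) := by
  rintro ⟨m, rfl⟩; exact ⟨m, by rw [smul_mul_assoc]⟩

lemma Sgn.dmap {x y : ExtA} (d : ExtA →ₗ[ℂ] ExtA) : Sgn x y → Sgn (d x) (d y) := by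
  rintro ⟨m, rfl⟩; exact ⟨m, by rw [map_smul]⟩

lemma Sgn.pull (v : Vsp) (L : List Vsp) : Sgn (ιv v * Pv L) (Pv L * ιv v) :=
  ⟨L.length, BR.pull v L⟩

lemma Sgn.pull' (v : Vsp) (L : List Vsp) : Sgn (Pv L * ιv v) (ιv v * Pv L) :=
  (Sgn.pull v L).symm

lemma Sgn.swap (A B : List Vsp) : Sgn (Pv A * Pv B) (Pv B * Pv A) :=
  ⟨A.length * B.length, BR.swap A B⟩

lemma Sgn.elim {x y : ExtA} : Sgn x y → ∃ ε : ℂ, (ε = 1 ∨ ε = -1) ∧ x = ε • y := by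
  rintro ⟨m, rfl⟩
  rcases Nat.even_or_odd m with h | h
  · exact ⟨1, Or.inl (Eq.refl _), by rw [h.neg_one_pow]⟩
  · exact ⟨-1, Or.inr (Eq.refl _), by rw [h.neg_one_pow]⟩

section dops
variable (d : ExtA →ₗ[ℂ] ExtA)
  (hleib : ∀ (v : Vsp) (y : ExtA), d (ιv v * y) = d (ιv v) * y - ιv v * d y)

lemma kill (p : Vsp) (G : List Vsp) (z : ExtA) (hz : ιv p * z = 0) :
    ιv p * (Pv G * z) = 0 := by
  rw [← mul_assoc, pull, smul_mul_assoc, mul_assoc, hz, mul_zero, smul_zero]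

lemma kill2 (p q : Vsp) (G : List Vsp) (z : ExtA) (hz : ιv p * z = 0) :
    (ιv p * ιv q) * (Pv G * z) = 0 := by
  rw [mul_assoc, ← mul_assoc (ιv q), ← Pv_cons]
  exact kill p (q :: G) z hz

include hleib in
lemma leib_closed (L : List Vsp) (h : ∀ v ∈ L, d (ιv v) = 0) (y : ExtA) :
    d (Pv L * y) = ((-1 : ℂ) ^ L.length) • (Pv L * d y) := by
  induction L with
  | nil => simp
  | cons v L ih =>
    rw [Pv_cons, mul_assoc, hleib, h v (by simp), zero_mul, zero_sub,
      ih (fun u hu => h u (by simp [hu])), mul_smul_comm, ← neg_smul, ← mul_assoc]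
    congr 1
    rw [List.length_cons, pow_succ]
    ring

include hleib in
lemma dPv_closed (L : List Vsp) (v : Vsp) (h : ∀ u ∈ v :: L, d (ιv u) = 0) :
    d (Pv (v :: L)) = 0 := by
  induction L generalizing v with
  | nil => simpa using h v (by simp)
  | cons w L' ih =>
    rw [Pv_cons, hleib, h v (by simp), zero_mul, zero_sub,
      ih w (fun u hu => h u (List.mem_cons_of_mem v hu)), mul_zero, neg_zero]

end dops
end BR
end
-- part 3
noncomputable section
namespace BR
variable (d : ExtA →ₗ[ℂ] ExtA)
  (hleib : ∀ (v : Vsp) (y : ExtA), d (ιv v * y) = d (ιv v) * y - ιv v * d y)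

include hleib in
lemma segdie (L : List Vsp) (y : ExtA)
    (h : ∀ v ∈ L, ∃ p q r s : Vsp,
      d (ιv v) = ιv p * ιv q + ιv r * ιv s ∧ ιv p * y = 0 ∧ ιv r * y = 0) :
    d (Pv L * y) = ((-1 : ℂ) ^ L.length) • (Pv L * d y) := by
  induction L with
  | nil => simp
  | cons v L ih =>
    obtain ⟨p, q, r, s, heq, hp, hr⟩ := h v (by simp)
    have hkill : d (ιv v) * (Pv L * y) = 0 := by
      rw [heq, add_mul, kill2 p q L y hp, kill2 r s L y hr, add_zero]
    rw [Pv_cons, mul_assoc, hleib, hkill, zero_sub,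
      ih (fun u hu => h u (List.mem_cons_of_mem v hu)), mul_smul_comm, ← neg_smul,
      ← mul_assoc]
    congr 1
    rw [List.length_cons, pow_succ]
    ring

def eV (j : ℕ) : Vsp := Finsupp.single (Sum.inl j) 1
def fV (j : ℕ) : Vsp := Finsupp.single (Sum.inr j) 1

lemma P_eq (A : List ℕ) : (A.map φ).prod = Pv (A.map eV) := by
  rw [Pv, List.map_map]; rfl

lemma Q_eq (B : List ℕ) : (B.map φb).prod = Pv (B.map fV) := by
  rw [Pv, List.map_map]; rfl

lemma mem_bidSpan (A B : List ℕ) :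
    (A.map φ).prod * (B.map φb).prod ∈ bidSpan A.length B.length := by
  refine Submodule.subset_span ⟨fun i => A.get i, fun i => B.get i, ?_⟩
  rw [show φ ∘ (fun i => A.get i) = (fun i => φ (A.get i)) from rfl,
    show φb ∘ (fun i => B.get i) = (fun i => φb (B.get i)) from rfl,
    ]
  simp only [List.get_eq_getElem, List.ofFn_getElem_eq_map]

end BR
end
-- part 4
noncomputable section
namespace BR

lemma Sgn.perm {L₁ L₂ : List Vsp} (h : L₁.Perm L₂) : Sgn (Pv L₁) (Pv L₂) := by
  induction h with
  | nil => exact Sgn.refl _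
  | cons x _ ih => exact (Sgn.of_eq (Pv_cons _ _)).trans ((ih.mulL _).trans (Sgn.of_eq (Pv_cons _ _).symm))
  | swap x y l =>
    refine ⟨1, ?_⟩
    rw [Pv_cons, Pv_cons, Pv_cons, Pv_cons, ← mul_assoc, ← mul_assoc, anticomm y x,
      pow_one, neg_mul, neg_smul, one_smul]
  | trans _ _ ih₁ ih₂ => exact ih₁.trans ih₂

lemma dPv_closed' (d : ExtA →ₗ[ℂ] ExtA)
    (hleib : ∀ (v : Vsp) (y : ExtA), d (ιv v * y) = d (ιv v) * y - ιv v * d y)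
    (L : List Vsp) (hne : L ≠ []) (h : ∀ u ∈ L, d (ιv u) = 0) : d (Pv L) = 0 := by
  cases L with
  | nil => exact absurd rfl hne
  | cons v L => exact dPv_closed d hleib L v h

lemma rsplit (s m n p t : ℕ) (hp : m + n = p) (ht : s + m = t) :
    List.range' s p = List.range' s m ++ List.range' t n := by
  subst ht; subst hp
  rw [← List.range'_append_1]

lemma idx_eq (m : ℕ) : idx m = List.range' 1 m := by
  rw [idx, List.range'_eq_map_range]
  simp [Nat.add_comm]

example (A B C : List Vsp) : (A ++ B ++ C).Perm (B ++ (C ++ A)) := by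
  rw [← Multiset.coe_eq_coe]
  simp only [← Multiset.coe_add]
  abel

end BR
end

-- part 5 : helper filter lemmas
noncomputable section
namespace BR

lemma filter_pass (c s k : ℕ) (h : c < s ∨ s + k ≤ c) :
    (List.range' s k).filter (· ≠ c) = List.range' s k := by
  apply List.filter_eq_self.2
  intro x hx
  obtain ⟨i, hi, rfl⟩ := List.mem_range'.1 hx
  simp only [ne_eq, decide_eq_true_eq]
  omega

lemma filter_pass_single (c x : ℕ) (h : x ≠ c) :
    ([x] : List ℕ).filter (· ≠ c) = [x] := by
  simp [h]

lemma filter_drop (c : ℕ) : ([c] : List ℕ).filter (· ≠ c) = [] := by simp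

lemma phi_eV (j : ℕ) : φ j = ιv (eV j) := rfl

lemma phib_fV (j : ℕ) : φb j = ιv (fV j) := rfl

lemma mem_bidSpan' (A B : List ℕ) (p q : ℕ) (hp : A.length = p) (hq : B.length = q) :
    (A.map φ).prod * (B.map φb).prod ∈ bidSpan p q := by
  subst hp; subst hq; exact mem_bidSpan A B

end BR
end


set_option maxHeartbeats 2000000 in
open BR in
/-- Structure equations of the Bigalke–Rollenske nilmanifold X^{4n−2}, as hypotheses:
dφʲ = 0 for 1 ≤ j < 3n−1; dφ^{3n−1} = φ^{2n}∧φ̄ⁿ;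
dφʲ = φ^{j−3n+1}∧φ^{j−2n+1} + φ^{j−2n}∧φ̄^{j−n} for 3n ≤ j ≤ 4n−2; conjugate relations.

STATEMENT 10: the (4n−3,4n−4)-form
η₁ = φ¹∧⋯(omit φ^{2n−2})⋯∧φ^{4n−2} ∧ φ̄¹∧⋯(omit φ̄^{3n−2})⋯∧φ̄^{4n−3}
has dη₁ = ε·ψ∧ψ̄ + ρ with ψ = φ¹∧⋯∧φ^{4n−3} simple, ε ∈ {±1}, and ρ of
bidegree (4n−2,4n−4); i.e. the (4n−3,4n−3)-component of dη₁ is ±ψ∧ψ̄. -/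
theorem stmt_10 (n : ℕ) (hn : 2 ≤ n) (d : ExtA →ₗ[ℂ] ExtA)
    (hleib : ∀ (v : Vsp) (y : ExtA),
      d (ExteriorAlgebra.ι ℂ v * y)
        = d (ExteriorAlgebra.ι ℂ v) * y - ExteriorAlgebra.ι ℂ v * d y)
    (hd0 : ∀ j, 1 ≤ j → j < 3 * n - 1 → d (φ j) = 0 ∧ d (φb j) = 0)
    (hd1 : d (φ (3 * n - 1)) = φ (2 * n) * φb n)
    (hd1b : d (φb (3 * n - 1)) = φb (2 * n) * φ n)
    (hd2 : ∀ j, 3 * n ≤ j → j ≤ 4 * n - 2 →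
      d (φ j) = φ (j - 3 * n + 1) * φ (j - 2 * n + 1) + φ (j - 2 * n) * φb (j - n) ∧
      d (φb j) = φb (j - 3 * n + 1) * φb (j - 2 * n + 1) + φb (j - 2 * n) * φ (j - n)) :
    ∃ ε : ℂ, (ε = 1 ∨ ε = -1) ∧ ∃ ρ ∈ bidSpan (4 * n - 2) (4 * n - 4),
      d ((((idx (4 * n - 2)).filter (· ≠ 2 * n - 2)).map φ).prod
          * (((idx (4 * n - 3)).filter (· ≠ 3 * n - 2)).map φb).prod)
        = ε • (((idx (4 * n - 3)).map φ).prod * ((idx (4 * n - 3)).map φb).prod) + ρ := by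
  obtain ⟨a, rfl⟩ := Nat.exists_eq_add_of_le hn
  simp only [show 4 * (2 + a) - 2 = 4*a+6 from by omega,
    show 2 * (2 + a) - 2 = 2*a+2 from by omega,
    show 4 * (2 + a) - 3 = 4*a+5 from by omega,
    show 3 * (2 + a) - 2 = 3*a+4 from by omega,
    show 4 * (2 + a) - 4 = 4*a+4 from by omega]
  -- split the index lists
  have hF : ((idx (4*a+6)).filter (· ≠ 2*a+2)) = (List.range' 1 (2*a+1) ++ (List.range' (2*a+3) (a+2) ++ ([3*a+5] ++ (List.range' (3*a+6) a ++ [4*a+6])))) := by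
    rw [idx_eq,
      rsplit 1 (2*a+1) (2*a+5) (4*a+6) (2*a+2) (by omega) (by omega),
      rsplit (2*a+2) 1 (2*a+4) (2*a+5) (2*a+3) (by omega) (by omega),
      rsplit (2*a+3) (a+2) (a+2) (2*a+4) (3*a+5) (by omega) (by omega),
      rsplit (3*a+5) 1 (a+1) (a+2) (3*a+6) (by omega) (by omega),
      rsplit (3*a+6) a 1 (a+1) (4*a+6) (by omega) (by omega)]
    simp only [List.range'_one, List.filter_append]
    rw [filter_pass _ _ _ (by omega), filter_drop,
      filter_pass _ _ _ (by omega), filter_pass_single _ _ (by omega),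
      filter_pass _ _ _ (by omega), filter_pass_single _ _ (by omega)]
    simp only [List.nil_append]
  have hG : ((idx (4*a+5)).filter (· ≠ 3*a+4)) = (List.range' 1 (3*a+3) ++ ([3*a+5] ++ List.range' (3*a+6) a)) := by
    rw [idx_eq,
      rsplit 1 (3*a+3) (a+2) (4*a+5) (3*a+4) (by omega) (by omega),
      rsplit (3*a+4) 1 (a+1) (a+2) (3*a+5) (by omega) (by omega),
      rsplit (3*a+5) 1 a (a+1) (3*a+6) (by omega) (by omega)]
    simp only [List.range'_one, List.filter_append]
    rw [filter_pass _ _ _ (by omega), filter_drop,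
      filter_pass_single _ _ (by omega), filter_pass _ _ _ (by omega)]
    simp only [List.nil_append]
  rw [hF, hG, idx_eq]
  simp only [P_eq, Q_eq]
  -- closed block
  have hdv0 : ∀ u ∈ ((List.range' 1 (2*a+1)).map eV ++ ((List.range' (2*a+3) (a+2)).map eV ++ (List.range' 1 (3*a+3)).map fV)), d (ιv u) = 0 := by
    intro u hu
    simp only [List.mem_append, List.mem_map] at hu
    rcases hu with ⟨j, hj, rfl⟩ | ⟨j, hj, rfl⟩ | ⟨j, hj, rfl⟩ <;>
      obtain ⟨i, hi, rfl⟩ := List.mem_range'.1 hj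
    · exact (hd0 _ (by omega) (by omega)).1
    · exact (hd0 _ (by omega) (by omega)).1
    · exact (hd0 _ (by omega) (by omega)).2
  have hdZ : d (Pv ((List.range' 1 (2*a+1)).map eV ++ ((List.range' (2*a+3) (a+2)).map eV ++ (List.range' 1 (3*a+3)).map fV))) = 0 := by
    apply dPv_closed' d hleib _ ?_ hdv0
    simp only [ne_eq, List.append_eq_nil_iff, List.map_eq_nil_iff, List.range'_eq_nil_iff]
    omega
  -- the M segment dies
  have hM : ∀ v ∈ (List.range' (3*a+6) a).map eV, ∃ p q r s : Vsp,
      d (ιv v) = ιv p * ιv q + ιv r * ιv s ∧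
      ιv p * (Pv ((List.range' (3*a+6) a).map fV) * Pv ((List.range' 1 (2*a+1)).map eV ++ ((List.range' (2*a+3) (a+2)).map eV ++ (List.range' 1 (3*a+3)).map fV))) = 0 ∧ ιv r * (Pv ((List.range' (3*a+6) a).map fV) * Pv ((List.range' 1 (2*a+1)).map eV ++ ((List.range' (2*a+3) (a+2)).map eV ++ (List.range' 1 (3*a+3)).map fV))) = 0 := by
    intro v hv
    obtain ⟨j, hj, rfl⟩ := List.mem_map.1 hv
    obtain ⟨i, hi, hji⟩ := List.mem_range'.1 hj
    refine ⟨eV (j - (3*a+5)), eV (j - (2*a+3)), eV (j - (2*a+4)), fV (j - (a+2)), ?_, ?_, ?_⟩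
    · have h := (hd2 j (by omega) (by omega)).1
      simp only [show j - 3*(2+a) + 1 = j - (3*a+5) from by omega,
        show j - 2*(2+a) + 1 = j - (2*a+3) from by omega,
        show j - 2*(2+a) = j - (2*a+4) from by omega,
        show j - (2+a) = j - (a+2) from by omega,
        show j - (2*a+4) + 1 = j - (2*a+3) from by omega, phi_eV, phib_fV] at h
      exact h
    · exact kill _ _ _ (mem_mul_zero (List.mem_append_left _
        (List.mem_map.2 ⟨j - (3*a+5), List.mem_range'.2 ⟨j - (3*a+6), by omega, by omega⟩, rfl⟩)))
    · exact kill _ _ _ (mem_mul_zero (List.mem_append_left _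
        (List.mem_map.2 ⟨j - (2*a+4), List.mem_range'.2 ⟨j - (2*a+5), by omega, by omega⟩, rfl⟩)))
  -- the N segment dies
  have hN : ∀ v ∈ (List.range' (3*a+6) a).map fV, ∃ p q r s : Vsp,
      d (ιv v) = ιv p * ιv q + ιv r * ιv s ∧
      ιv p * (Pv ((List.range' 1 (2*a+1)).map eV ++ ((List.range' (2*a+3) (a+2)).map eV ++ (List.range' 1 (3*a+3)).map fV))) = 0 ∧ ιv r * (Pv ((List.range' 1 (2*a+1)).map eV ++ ((List.range' (2*a+3) (a+2)).map eV ++ (List.range' 1 (3*a+3)).map fV))) = 0 := by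
    intro v hv
    obtain ⟨j, hj, rfl⟩ := List.mem_map.1 hv
    obtain ⟨i, hi, hji⟩ := List.mem_range'.1 hj
    refine ⟨fV (j - (3*a+5)), fV (j - (2*a+3)), fV (j - (2*a+4)), eV (j - (a+2)), ?_, ?_, ?_⟩
    · have h := (hd2 j (by omega) (by omega)).2
      simp only [show j - 3*(2+a) + 1 = j - (3*a+5) from by omega,
        show j - 2*(2+a) + 1 = j - (2*a+3) from by omega,
        show j - 2*(2+a) = j - (2*a+4) from by omega,
        show j - (2+a) = j - (a+2) from by omega,
        show j - (2*a+4) + 1 = j - (2*a+3) from by omega, phi_eV, phib_fV] at h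
      exact h
    · exact mem_mul_zero (List.mem_append_right _ (List.mem_append_right _
        (List.mem_map.2 ⟨j - (3*a+5), List.mem_range'.2 ⟨j - (3*a+6), by omega, by omega⟩, rfl⟩)))
    · exact mem_mul_zero (List.mem_append_right _ (List.mem_append_right _
        (List.mem_map.2 ⟨j - (2*a+4), List.mem_range'.2 ⟨j - (2*a+5), by omega, by omega⟩, rfl⟩)))
  have hW3 : d (Pv ((List.range' (3*a+6) a).map eV) * (Pv ((List.range' (3*a+6) a).map fV) * Pv ((List.range' 1 (2*a+1)).map eV ++ ((List.range' (2*a+3) (a+2)).map eV ++ (List.range' 1 (3*a+3)).map fV)))) = 0 := by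
    rw [segdie d hleib _ _ hM, segdie d hleib _ _ hN, hdZ, mul_zero, smul_zero, mul_zero,
      smul_zero]
  have hW2 : d (ιv (eV (3*a+5)) * (Pv ((List.range' (3*a+6) a).map eV) * (Pv ((List.range' (3*a+6) a).map fV) * Pv ((List.range' 1 (2*a+1)).map eV ++ ((List.range' (2*a+3) (a+2)).map eV ++ (List.range' 1 (3*a+3)).map fV))))) = 0 := by
    rw [hleib, hW3, mul_zero, sub_zero]
    have h1 : d (ιv (eV (3*a+5))) = ιv (eV (2*a+4)) * ιv (fV (a+2)) := by
      have h := hd1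
      simp only [show 3*(2+a)-1 = 3*a+5 from by omega, show 2*(2+a) = 2*a+4 from by omega,
        show (2+a) = a+2 from by omega, phi_eV, phib_fV] at h
      exact h
    rw [h1]
    have hb : (Pv ((List.range' (3*a+6) a).map eV) * (Pv ((List.range' (3*a+6) a).map fV) * Pv ((List.range' 1 (2*a+1)).map eV ++ ((List.range' (2*a+3) (a+2)).map eV ++ (List.range' 1 (3*a+3)).map fV)))) = Pv ((List.range' (3*a+6) a).map eV ++ (List.range' (3*a+6) a).map fV) * Pv ((List.range' 1 (2*a+1)).map eV ++ ((List.range' (2*a+3) (a+2)).map eV ++ (List.range' 1 (3*a+3)).map fV)) := by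
      simp only [Pv_append, Pv_singleton, mul_assoc]
    rw [hb]
    exact kill2 _ _ _ _ (mem_mul_zero (List.mem_append_right _ (List.mem_append_left _
      (List.mem_map.2 ⟨2*a+4, List.mem_range'.2 ⟨1, by omega, by omega⟩, rfl⟩))))
  have hW1 : d (ιv (fV (3*a+5)) * (ιv (eV (3*a+5)) * (Pv ((List.range' (3*a+6) a).map eV) * (Pv ((List.range' (3*a+6) a).map fV) * Pv ((List.range' 1 (2*a+1)).map eV ++ ((List.range' (2*a+3) (a+2)).map eV ++ (List.range' 1 (3*a+3)).map fV)))))) = ((ιv (fV (2*a+4)) * ιv (eV (a+2))) * (ιv (eV (3*a+5)) * (Pv ((List.range' (3*a+6) a).map eV) * (Pv ((List.range' (3*a+6) a).map fV) * Pv ((List.range' 1 (2*a+1)).map eV ++ ((List.range' (2*a+3) (a+2)).map eV ++ (List.range' 1 (3*a+3)).map fV)))))) := by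
    rw [hleib, hW2, mul_zero, sub_zero]
    have h1 : d (ιv (fV (3*a+5))) = ιv (fV (2*a+4)) * ιv (eV (a+2)) := by
      have h := hd1b
      simp only [show 3*(2+a)-1 = 3*a+5 from by omega, show 2*(2+a) = 2*a+4 from by omega,
        show (2+a) = a+2 from by omega, phi_eV, phib_fV] at h
      exact h
    rw [h1]
  have hW0 : d (ιv (eV (4*a+6)) * (ιv (fV (3*a+5)) * (ιv (eV (3*a+5)) * (Pv ((List.range' (3*a+6) a).map eV) * (Pv ((List.range' (3*a+6) a).map fV) * Pv ((List.range' 1 (2*a+1)).map eV ++ ((List.range' (2*a+3) (a+2)).map eV ++ (List.range' 1 (3*a+3)).map fV))))))) = (ιv (eV (2*a+2)) * ιv (fV (3*a+4))) * (ιv (fV (3*a+5)) * (ιv (eV (3*a+5)) * (Pv ((List.range' (3*a+6) a).map eV) * (Pv ((List.range' (3*a+6) a).map fV) * Pv ((List.range' 1 (2*a+1)).map eV ++ ((List.range' (2*a+3) (a+2)).map eV ++ (List.range' 1 (3*a+3)).map fV)))))) - ιv (eV (4*a+6)) * ((ιv (fV (2*a+4)) * ιv (eV (a+2))) * (ιv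 (eV (3*a+5)) * (Pv ((List.range' (3*a+6) a).map eV) * (Pv ((List.range' (3*a+6) a).map fV) * Pv ((List.range' 1 (2*a+1)).map eV ++ ((List.range' (2*a+3) (a+2)).map eV ++ (List.range' 1 (3*a+3)).map fV)))))) := by
    rw [hleib, hW1]
    congr 1
    have h46 : d (ιv (eV (4*a+6)))
        = ιv (eV (a+1)) * ιv (eV (2*a+3)) + ιv (eV (2*a+2)) * ιv (fV (3*a+4)) := by
      have h := (hd2 (4*(2+a)-2) (by omega) (by omega)).1
      simp only [show 4*(2+a)-2 = 4*a+6 from by omega,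
        show 4*a+6 - 3*(2+a) + 1 = a+1 from by omega,
        show 4*a+6 - 2*(2+a) + 1 = 2*a+3 from by omega,
        show 4*a+6 - 2*(2+a) = 2*a+2 from by omega,
        show 4*a+6 - (2+a) = 3*a+4 from by omega, phi_eV, phib_fV] at h
      exact h
    rw [h46, add_mul]
    have hb : (ιv (fV (3*a+5)) * (ιv (eV (3*a+5)) * (Pv ((List.range' (3*a+6) a).map eV) * (Pv ((List.range' (3*a+6) a).map fV) * Pv ((List.range' 1 (2*a+1)).map eV ++ ((List.range' (2*a+3) (a+2)).map eV ++ (List.range' 1 (3*a+3)).map fV)))))) = Pv ([fV (3*a+5)] ++ ([eV (3*a+5)] ++ ((List.range' (3*a+6) a).map eV ++ (List.range' (3*a+6) a).map fV))) * Pv ((List.range' 1 (2*a+1)).map eV ++ ((List.range' (2*a+3) (a+2)).map eV ++ (List.range' 1 (3*a+3)).map fV)) := by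
      simp only [Pv_append, Pv_singleton, mul_assoc]
    rw [hb, kill2 _ _ _ _ (mem_mul_zero (List.mem_append_left _
      (List.mem_map.2 ⟨a+1, List.mem_range'.2 ⟨a, by omega, by omega⟩, rfl⟩))), zero_add]
  -- sign bookkeeping
  have sg1 : Sgn (Pv ((List.range' 1 (2*a+1) ++ (List.range' (2*a+3) (a+2) ++ ([3*a+5] ++ (List.range' (3*a+6) a ++ [4*a+6])))).map eV) * Pv ((List.range' 1 (3*a+3) ++ ([3*a+5] ++ List.range' (3*a+6) a)).map fV)) (ιv (eV (4*a+6)) * (ιv (fV (3*a+5)) * (ιv (eV (3*a+5)) * (Pv ((List.range' (3*a+6) a).map eV) * (Pv ((List.range' (3*a+6) a).map fV) * Pv ((List.range' 1 (2*a+1)).map eV ++ ((List.range' (2*a+3) (a+2)).map eV ++ (List.range' 1 (3*a+3)).map fV))))))) := by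
    refine (Sgn.of_eq (Pv_append _ _).symm).trans ((Sgn.perm (L₂ := ([eV (4*a+6)] ++ ([fV (3*a+5)] ++ ([eV (3*a+5)] ++ ((List.range' (3*a+6) a).map eV ++ ((List.range' (3*a+6) a).map fV ++ ((List.range' 1 (2*a+1)).map eV ++ ((List.range' (2*a+3) (a+2)).map eV ++ (List.range' 1 (3*a+3)).map fV)))))))) ?_).trans (Sgn.of_eq ?_))
    · rw [← Multiset.coe_eq_coe]
      simp only [List.map_append, List.map_cons, List.map_nil, ← Multiset.coe_add]
      abel
    · simp only [Pv_append, Pv_singleton, mul_assoc]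
  obtain ⟨m1, hm1⟩ := sg1
  have sg2 : Sgn ((ιv (eV (2*a+2)) * ιv (fV (3*a+4))) * (ιv (fV (3*a+5)) * (ιv (eV (3*a+5)) * (Pv ((List.range' (3*a+6) a).map eV) * (Pv ((List.range' (3*a+6) a).map fV) * Pv ((List.range' 1 (2*a+1)).map eV ++ ((List.range' (2*a+3) (a+2)).map eV ++ (List.range' 1 (3*a+3)).map fV))))))) (Pv ((List.range' 1 (4*a+5)).map eV) * Pv ((List.range' 1 (4*a+5)).map fV)) := by
    refine (Sgn.of_eq (?_ : _ = Pv ([eV (2*a+2)] ++ ([fV (3*a+4)] ++ ([fV (3*a+5)] ++ ([eV (3*a+5)] ++ ((List.range' (3*a+6) a).map eV ++ ((List.range' (3*a+6) a).map fV ++ ((List.range' 1 (2*a+1)).map eV ++ ((List.range' (2*a+3) (a+2)).map eV ++ (List.range' 1 (3*a+3)).map fV)))))))))).trans ((Sgn.perm (L₂ := ((List.range' 1 (2*a+1)).map eV ++ ([eV (2*a+2)] ++ ((List.range' (2*a+3) (a+2)).map eV ++ ([eV (3*a+5)] ++ (List.range' (3*a+6) a).map eV)))) ++ ((List.range' 1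 (3*a+3)).map fV ++ ([fV (3*a+4)] ++ ([fV (3*a+5)] ++ (List.range' (3*a+6) a).map fV)))) ?_).trans (Sgn.of_eq ?_))
    · simp only [Pv_append, Pv_singleton, mul_assoc]
    · rw [← Multiset.coe_eq_coe]
      simp only [← Multiset.coe_add]
      abel
    · have eqE : ((List.range' 1 (4*a+5)).map eV) = ((List.range' 1 (2*a+1)).map eV ++ ([eV (2*a+2)] ++ ((List.range' (2*a+3) (a+2)).map eV ++ ([eV (3*a+5)] ++ (List.range' (3*a+6) a).map eV)))) := by
        rw [rsplit 1 (2*a+1) (2*a+4) (4*a+5) (2*a+2) (by omega) (by omega),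
          rsplit (2*a+2) 1 (2*a+3) (2*a+4) (2*a+3) (by omega) (by omega),
          rsplit (2*a+3) (a+2) (a+1) (2*a+3) (3*a+5) (by omega) (by omega),
          rsplit (3*a+5) 1 a (a+1) (3*a+6) (by omega) (by omega)]
        simp only [List.range'_one, List.map_append, List.map_cons, List.map_nil]
      have eqF : ((List.range' 1 (4*a+5)).map fV) = ((List.range' 1 (3*a+3)).map fV ++ ([fV (3*a+4)] ++ ([fV (3*a+5)] ++ (List.range' (3*a+6) a).map fV))) := by
        rw [rsplit 1 (3*a+3) (a+2) (4*a+5) (3*a+4) (by omega) (by omega),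
          rsplit (3*a+4) 1 (a+1) (a+2) (3*a+5) (by omega) (by omega),
          rsplit (3*a+5) 1 a (a+1) (3*a+6) (by omega) (by omega)]
        simp only [List.range'_one, List.map_append, List.map_cons, List.map_nil]
      rw [← eqE, ← eqF, Pv_append]
  obtain ⟨m2, hm2⟩ := sg2
  have sg3 : Sgn (ιv (eV (4*a+6)) * ((ιv (fV (2*a+4)) * ιv (eV (a+2))) * (ιv (eV (3*a+5)) * (Pv ((List.range' (3*a+6) a).map eV) * (Pv ((List.range' (3*a+6) a).map fV) * Pv ((List.range' 1 (2*a+1)).map eV ++ ((List.range' (2*a+3) (a+2)).map eV ++ (List.range' 1 (3*a+3)).map fV))))))) ((([4*a+6] ++ ([a+2] ++ ([3*a+5] ++ (List.range' (3*a+6) a ++ (List.range' 1 (2*a+1) ++ List.range' (2*a+3) (a+2)))))).map φ).prod * (([2*a+4] ++ (List.range' (3*a+6) a ++ List.range' 1 (3*a+3))).map φb).prod) := by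
    refine (Sgn.of_eq (?_ : _ = Pv ([eV (4*a+6)] ++ ([fV (2*a+4)] ++ ([eV (a+2)] ++ ([eV (3*a+5)] ++ ((List.range' (3*a+6) a).map eV ++ ((List.range' (3*a+6) a).map fV ++ ((List.range' 1 (2*a+1)).map eV ++ ((List.range' (2*a+3) (a+2)).map eV ++ (List.range' 1 (3*a+3)).map fV)))))))))).trans ((Sgn.perm (L₂ := ([4*a+6] ++ ([a+2] ++ ([3*a+5] ++ (List.range' (3*a+6) a ++ (List.range' 1 (2*a+1) ++ List.range' (2*a+3) (a+2)))))).map eV ++ ([2*a+4] ++ (List.range' (3*a+6) a ++ List.range' 1 (3*a+3))).map fV) ?_).trans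
      (Sgn.of_eq ?_))
    · simp only [Pv_append, Pv_singleton, mul_assoc]
    · rw [← Multiset.coe_eq_coe]
      simp only [List.map_append, List.map_cons, List.map_nil, ← Multiset.coe_add]
      abel
    · rw [Pv_append, ← P_eq, ← Q_eq]
  obtain ⟨m3, hm3⟩ := sg3
  refine ⟨(-1)^(m1+m2), ?_, -((-1:ℂ)^(m1+m3) • ((([4*a+6] ++ ([a+2] ++ ([3*a+5] ++ (List.range' (3*a+6) a ++ (List.range' 1 (2*a+1) ++ List.range' (2*a+3) (a+2)))))).map φ).prod * (([2*a+4] ++ (List.range' (3*a+6) a ++ List.range' 1 (3*a+3))).map φb).prod)), ?_, ?_⟩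
  · rcases Nat.even_or_odd (m1+m2) with h | h
    · exact Or.inl h.neg_one_pow
    · exact Or.inr h.neg_one_pow
  · refine Submodule.neg_mem _ (Submodule.smul_mem _ _ (mem_bidSpan' _ _ _ _ ?_ ?_)) <;>
    · simp only [List.length_append, List.length_cons, List.length_nil, List.length_range']
      omega
  · rw [hm1, map_smul, hW0, hm2, hm3, smul_sub, smul_smul, smul_smul, ← pow_add, ← pow_add,
      sub_eq_add_neg]
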